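/- Let k be a field of characteristic ≠ 2 and let σ be a k-algebra involution of the formal power series ring k[[t]]. Write σ(t) = ξ·t + (higher order terms) with ξ ∈ k; then ξ² = 1. Define φ : k[[t]] → k[[t]] by φ(t) = (t + ξ·σ(t))/2. Then φ is a k-algebra automorphism of k[[t]], and the conjugate involution σ' := φ⁻¹ ∘ σ ∘ φ satisfies σ'(t) = ξ·t. -/

import Mathlib

open PowerSeries

namespace SubstAux

variable {k : Type*} [Field k]

lemma coeff_aeval_eq_zero (g : PowerSeries k) (hg : constantCoeff g = 0)
    (p : Polynomial k) (m : ℕ) (hp : ∀ i ≤ m, p.coeff i = 0) :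
    PowerSeries.coeff m (Polynomial.aeval g p) = 0 := by
  obtain ⟨q, rfl⟩ : (Polynomial.X : Polynomial k) ^ (m + 1) ∣ p :=
    Polynomial.X_pow_dvd_iff.mpr fun d hd => hp d (Nat.lt_succ_iff.mp hd)
  have hxg : (X : PowerSeries k) ∣ g := X_dvd_iff.mpr hg
  have : (X : PowerSeries k) ^ (m + 1) ∣ Polynomial.aeval g (Polynomial.X ^ (m + 1) * q) := by
    rw [map_mul, map_pow, Polynomial.aeval_X]
    exact dvd_mul_of_dvd_left (pow_dvd_pow_of_dvd hxg (m + 1)) _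
  exact X_pow_dvd_iff.mp this m (Nat.lt_succ_self m)

lemma coeff_aeval_congr (g : PowerSeries k) (hg : constantCoeff g = 0)
    (p₁ p₂ : Polynomial k) (m : ℕ) (h : ∀ i ≤ m, p₁.coeff i = p₂.coeff i) :
    PowerSeries.coeff m (Polynomial.aeval g p₁) = PowerSeries.coeff m (Polynomial.aeval g p₂) := by
  have h0 := coeff_aeval_eq_zero g hg (p₁ - p₂) m (fun i hi => by
    simp [Polynomial.coeff_sub, h i hi])
  rw [map_sub, map_sub, sub_eq_zero] at h0
  exact h0

noncomputable def substFun (g f : PowerSeries k) : PowerSeries k :=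
  PowerSeries.mk fun m => PowerSeries.coeff m (Polynomial.aeval g (trunc (m + 1) f))

lemma coeff_substFun (g f : PowerSeries k) (m : ℕ) :
    PowerSeries.coeff m (substFun g f)
      = PowerSeries.coeff m (Polynomial.aeval g (trunc (m + 1) f)) :=
  coeff_mk m _

lemma coeff_substFun' (g : PowerSeries k) (hg : constantCoeff g = 0) (f : PowerSeries k)
    {m n : ℕ} (h : m < n) :
    PowerSeries.coeff m (substFun g f)
      = PowerSeries.coeff m (Polynomial.aeval g (trunc n f)) := by
  rw [coeff_substFun]
  refine coeff_aeval_congr g hg _ _ m fun i hi => ?_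
  rw [coeff_trunc, coeff_trunc, if_pos (Nat.lt_succ_iff.mpr hi), if_pos (lt_of_le_of_lt hi h)]

noncomputable def substAlgHom (g : PowerSeries k) (hg : constantCoeff g = 0) :
    PowerSeries k →ₐ[k] PowerSeries k where
  toFun := substFun g
  map_one' := by
    ext m
    rw [coeff_substFun, trunc_one, map_one]
  map_mul' f₁ f₂ := by
    ext m
    rw [coeff_substFun]
    have step1 : PowerSeries.coeff m (Polynomial.aeval g (trunc (m + 1) (f₁ * f₂)))
        = PowerSeries.coeff m (Polynomial.aeval g (trunc (m + 1) f₁ * trunc (m + 1) f₂)) := by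
      refine coeff_aeval_congr g hg _ _ m fun i hi => ?_
      rw [coeff_trunc, if_pos (Nat.lt_succ_iff.mpr hi), Polynomial.coeff_mul,
        PowerSeries.coeff_mul]
      refine Finset.sum_congr rfl fun ab hab => ?_
      rw [Finset.HasAntidiagonal.mem_antidiagonal] at hab
      rw [coeff_trunc, coeff_trunc, if_pos (by omega), if_pos (by omega)]
    rw [step1, map_mul, PowerSeries.coeff_mul, PowerSeries.coeff_mul]
    refine Finset.sum_congr rfl fun ab hab => ?_
    rw [Finset.HasAntidiagonal.mem_antidiagonal] at hab
    rw [coeff_substFun' g hg f₁ (show ab.1 < m + 1 by omega),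
      coeff_substFun' g hg f₂ (show ab.2 < m + 1 by omega)]
  map_zero' := by
    ext m
    rw [coeff_substFun]
    simp
  map_add' f₁ f₂ := by
    ext m
    rw [map_add, coeff_substFun, coeff_substFun, coeff_substFun, map_add, map_add, map_add]
  commutes' a := by
    ext m
    rw [coeff_substFun]
    have hC : (algebraMap k (PowerSeries k)) a = PowerSeries.C a := by
      simp [PowerSeries.algebraMap_apply]
    rw [hC, trunc_C]
    simp [hC.symm]

lemma substAlgHom_apply (g : PowerSeries k) (hg : constantCoeff g = 0) (f : PowerSeries k) :
    substAlgHom g hg f = substFun g f := rfl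

lemma substAlgHom_X (g : PowerSeries k) (hg : constantCoeff g = 0) :
    substAlgHom g hg X = g := by
  ext m
  rw [substAlgHom_apply, coeff_substFun]
  cases m with
  | zero =>
      have h1 : trunc 1 (X : PowerSeries k) = 0 := by
        ext i
        rw [coeff_trunc]
        split
        · next h => interval_cases i; simp
        · simp
      rw [h1, map_zero, map_zero, eq_comm, coeff_zero_eq_constantCoeff_apply]
      exact hg
  | succ m =>
      rw [trunc_X_of (by omega)]
      simp

lemma coeff_pow_self (g : PowerSeries k) (hg : constantCoeff g = 0) :
    ∀ n, PowerSeries.coeff n (g ^ n) = (PowerSeries.coeff 1 g) ^ n := by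
  intro n
  induction n with
  | zero => simp
  | succ n ih =>
      have hdvd : (X : PowerSeries k) ^ n ∣ g ^ n :=
        pow_dvd_pow_of_dvd (X_dvd_iff.mpr hg) n
      rw [pow_succ, PowerSeries.coeff_mul]
      rw [Finset.sum_eq_single (n, 1)]
      · rw [ih, pow_succ]
      · rintro ⟨a, b⟩ hab hne
        rw [Finset.HasAntidiagonal.mem_antidiagonal] at hab
        simp only [ne_eq, Prod.mk.injEq, not_and] at hne
        rcases lt_trichotomy a n with h | h | h
        · rw [X_pow_dvd_iff.mp hdvd a h, zero_mul]
        · exact absurd (by omega : b = 1) (hne h)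
        · have hb : b = 0 := by omega
          subst hb
          rw [coeff_zero_eq_constantCoeff_apply, hg, mul_zero]
      · intro h
        simp at h

lemma substFun_injective (g : PowerSeries k) (hg : constantCoeff g = 0)
    (hg1 : PowerSeries.coeff 1 g ≠ 0) : Function.Injective (substAlgHom g hg) := by
  rw [injective_iff_map_eq_zero]
  intro f hf
  by_contra hfne
  have hP : ∃ n, PowerSeries.coeff n f ≠ 0 := by
    by_contra h
    push_neg at h
    exact hfne (PowerSeries.ext h)
  classical
  set n := Nat.find hP with hndef
  have hn : PowerSeries.coeff n f ≠ 0 := Nat.find_spec hP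
  have hmin : ∀ i < n, PowerSeries.coeff i f = 0 := by
    intro i hi
    by_contra h
    exact Nat.find_min hP (hndef ▸ hi) h
  have htr : trunc (n + 1) f = Polynomial.C (PowerSeries.coeff n f) * Polynomial.X ^ n := by
    ext i
    rw [coeff_trunc, Polynomial.coeff_C_mul, Polynomial.coeff_X_pow]
    rcases lt_trichotomy i n with h | h | h
    · rw [if_pos (by omega), hmin i h, if_neg (by omega), mul_zero]
    · subst h
      rw [if_pos (by omega), if_pos rfl, mul_one]
    · rw [if_neg (by omega), if_neg (by omega), mul_zero]
  have hc : PowerSeries.coeff n (substAlgHom g hg f)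
      = PowerSeries.coeff n f * (PowerSeries.coeff 1 g) ^ n := by
    rw [substAlgHom_apply, coeff_substFun, htr, map_mul, Polynomial.aeval_C, map_pow,
      Polynomial.aeval_X]
    have hC : (algebraMap k (PowerSeries k)) (PowerSeries.coeff n f)
        = PowerSeries.C (PowerSeries.coeff n f) := by
      simp [PowerSeries.algebraMap_apply]
    rw [hC, PowerSeries.coeff_C_mul, coeff_pow_self g hg n]
  rw [hf, map_zero] at hc
  exact (mul_ne_zero hn (pow_ne_zero n hg1)) hc.symm

noncomputable def approx (g f : PowerSeries k) : ℕ → Polynomial k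
  | 0 => 0
  | (m + 1) => approx g f m +
      Polynomial.C ((PowerSeries.coeff m f
          - PowerSeries.coeff m (Polynomial.aeval g (approx g f m)))
        * (PowerSeries.coeff 1 g ^ m)⁻¹) * Polynomial.X ^ m

noncomputable def dcoef (g f : PowerSeries k) (m : ℕ) : k :=
  (PowerSeries.coeff m f - PowerSeries.coeff m (Polynomial.aeval g (approx g f m)))
    * (PowerSeries.coeff 1 g ^ m)⁻¹

lemma approx_succ (g f : PowerSeries k) (m : ℕ) :
    approx g f (m + 1) = approx g f m + Polynomial.C (dcoef g f m) * Polynomial.X ^ m := rfl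

lemma coeff_approx (g f : PowerSeries k) :
    ∀ n i, (approx g f n).coeff i = if i < n then dcoef g f i else 0 := by
  intro n
  induction n with
  | zero => intro i; simp [approx]
  | succ n ih =>
      intro i
      rw [approx_succ, Polynomial.coeff_add, Polynomial.coeff_C_mul, Polynomial.coeff_X_pow, ih]
      rcases lt_trichotomy i n with h | h | h
      · rw [if_pos h, if_neg (by omega), mul_zero, add_zero, if_pos (by omega)]
      · subst h
        rw [if_neg (by omega), if_pos rfl, mul_one, zero_add, if_pos (by omega)]
      · rw [if_neg (by omega), if_neg (by omega), mul_zero, add_zero, if_neg (by omega)]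

lemma trunc_mk_dcoef (g f : PowerSeries k) (m : ℕ) :
    trunc (m + 1) (PowerSeries.mk (dcoef g f)) = approx g f (m + 1) := by
  ext i
  rw [coeff_trunc, coeff_approx, coeff_mk]

lemma substAlgHom_mk_dcoef (g : PowerSeries k) (hg : constantCoeff g = 0)
    (hg1 : PowerSeries.coeff 1 g ≠ 0) (f : PowerSeries k) :
    substAlgHom g hg (PowerSeries.mk (dcoef g f)) = f := by
  ext m
  rw [substAlgHom_apply, coeff_substFun, trunc_mk_dcoef, approx_succ, map_add, map_add, map_mul,
    Polynomial.aeval_C, map_pow, Polynomial.aeval_X]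
  have hC : (algebraMap k (PowerSeries k)) (dcoef g f m) = PowerSeries.C (dcoef g f m) := by
    simp [PowerSeries.algebraMap_apply]
  rw [hC, PowerSeries.coeff_C_mul, coeff_pow_self g hg m, dcoef,
    mul_assoc, inv_mul_cancel₀ (pow_ne_zero m hg1), mul_one]
  ring

noncomputable def substEquiv (g : PowerSeries k) (hg : constantCoeff g = 0)
    (hg1 : PowerSeries.coeff 1 g ≠ 0) : PowerSeries k ≃ₐ[k] PowerSeries k :=
  AlgEquiv.ofBijective (substAlgHom g hg)
    ⟨substFun_injective g hg hg1, fun f => ⟨PowerSeries.mk (dcoef g f),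
      substAlgHom_mk_dcoef g hg hg1 f⟩⟩

lemma substEquiv_X (g : PowerSeries k) (hg : constantCoeff g = 0)
    (hg1 : PowerSeries.coeff 1 g ≠ 0) : substEquiv g hg hg1 X = g :=
  substAlgHom_X g hg

end SubstAux

theorem stmt_5 {k : Type*} [Field k] (hchar : (2 : k) ≠ 0)
    (σ : PowerSeries k ≃ₐ[k] PowerSeries k)
    (hσ : ∀ f : PowerSeries k, σ (σ f) = f)
    (ξ : k) (hξ : ξ = PowerSeries.coeff 1 (σ PowerSeries.X)) :
    ξ ^ 2 = 1 ∧
      ∃ φ : PowerSeries k ≃ₐ[k] PowerSeries k,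
        φ PowerSeries.X =
          (2 : k)⁻¹ • (PowerSeries.X + PowerSeries.C ξ * σ PowerSeries.X) ∧
        φ.symm (σ (φ PowerSeries.X)) = PowerSeries.C ξ * PowerSeries.X := by
  classical
  have hCalg : ∀ a : k, PowerSeries.C a = algebraMap k (PowerSeries k) a := by
    intro a; simp [PowerSeries.algebraMap_apply]
  have hCσ : ∀ a : k, σ (PowerSeries.C a) = PowerSeries.C a := by
    intro a; rw [hCalg, AlgEquiv.commutes]
  have h0 : PowerSeries.constantCoeff (σ PowerSeries.X) = 0 := by
    by_contra h
    have hu : IsUnit (σ PowerSeries.X) :=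
      PowerSeries.isUnit_iff_constantCoeff.mpr (isUnit_iff_ne_zero.mpr h)
    have hx : IsUnit (PowerSeries.X : PowerSeries k) := by
      have := hu.map σ.symm
      rwa [AlgEquiv.symm_apply_apply] at this
    have := PowerSeries.isUnit_iff_constantCoeff.mp hx
    rw [PowerSeries.constantCoeff_X] at this
    exact not_isUnit_zero this
  have hXdvd : (PowerSeries.X : PowerSeries k) ∣ σ PowerSeries.X :=
    PowerSeries.X_dvd_iff.mpr h0
  have hL : ∀ h : PowerSeries k, PowerSeries.coeff 1 (σ h)
      = PowerSeries.coeff 1 h * PowerSeries.coeff 1 (σ PowerSeries.X) := by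
    intro h
    have hdvd : (PowerSeries.X : PowerSeries k) ^ 2 ∣
        (h - PowerSeries.C (PowerSeries.coeff 0 h)
          - PowerSeries.C (PowerSeries.coeff 1 h) * PowerSeries.X) := by
      rw [PowerSeries.X_pow_dvd_iff]
      intro m hm
      interval_cases m <;>
        simp [map_sub, PowerSeries.coeff_C, PowerSeries.coeff_C_mul, PowerSeries.coeff_X,
          PowerSeries.coeff_zero_eq_constantCoeff]
    obtain ⟨r, hr⟩ := hdvd
    have hh : h = PowerSeries.C (PowerSeries.coeff 0 h)
        + PowerSeries.C (PowerSeries.coeff 1 h) * PowerSeries.X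
        + PowerSeries.X ^ 2 * r := by
      rw [← hr]; ring
    have hσh : σ h = PowerSeries.C (PowerSeries.coeff 0 h)
        + PowerSeries.C (PowerSeries.coeff 1 h) * σ PowerSeries.X
        + (σ PowerSeries.X) ^ 2 * σ r := by
      conv_lhs => rw [hh]
      rw [map_add, map_add, map_mul, map_mul, map_pow, hCσ, hCσ]
    have hr2 : PowerSeries.coeff 1 ((σ PowerSeries.X) ^ 2 * σ r) = 0 := by
      have : (PowerSeries.X : PowerSeries k) ^ 2 ∣ (σ PowerSeries.X) ^ 2 * σ r :=
        dvd_mul_of_dvd_left (pow_dvd_pow_of_dvd hXdvd 2) _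
      exact PowerSeries.X_pow_dvd_iff.mp this 1 (by norm_num)
    rw [hσh, map_add, map_add, PowerSeries.coeff_C_mul, hr2, add_zero, PowerSeries.coeff_C,
      if_neg (by norm_num), zero_add]
  have hξξ : ξ * ξ = 1 := by
    have h1 := hL (σ PowerSeries.X)
    rw [hσ PowerSeries.X, PowerSeries.coeff_one_X] at h1
    rw [hξ]
    exact h1.symm
  have hξ2 : ξ ^ 2 = 1 := by rw [pow_two]; exact hξξ
  set g : PowerSeries k :=
    (2 : k)⁻¹ • (PowerSeries.X + PowerSeries.C ξ * σ PowerSeries.X) with hgdef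
  have hg0 : PowerSeries.constantCoeff g = 0 := by
    rw [← PowerSeries.coeff_zero_eq_constantCoeff_apply, hgdef, PowerSeries.coeff_smul, map_add,
      PowerSeries.coeff_C_mul, PowerSeries.coeff_zero_eq_constantCoeff_apply,
      PowerSeries.coeff_zero_eq_constantCoeff_apply, PowerSeries.constantCoeff_X, h0]
    simp
  have hg1 : PowerSeries.coeff 1 g = 1 := by
    rw [hgdef, PowerSeries.coeff_smul, map_add, PowerSeries.coeff_C_mul,
      PowerSeries.coeff_one_X, ← hξ, hξξ, smul_eq_mul]
    rw [one_add_one_eq_two, inv_mul_cancel₀ hchar]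
  have hg1' : PowerSeries.coeff 1 g ≠ 0 := by rw [hg1]; exact one_ne_zero
  refine ⟨hξ2, SubstAux.substEquiv g hg0 hg1', SubstAux.substEquiv_X g hg0 hg1', ?_⟩
  set φ := SubstAux.substEquiv g hg0 hg1' with hφdef
  have hφX : φ PowerSeries.X = g := SubstAux.substEquiv_X g hg0 hg1'
  rw [hφX]
  have hmulC : PowerSeries.C ξ * PowerSeries.C ξ = 1 := by
    rw [← map_mul, hξξ, map_one]
  have hσg : σ g = PowerSeries.C ξ * g := by
    rw [hgdef, map_smul, map_add, map_mul, hCσ, hσ, mul_smul_comm]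
    congr 1
    rw [mul_add, ← mul_assoc, hmulC, one_mul, add_comm]
  rw [hσg]
  have hkey : PowerSeries.C ξ * g = φ (PowerSeries.C ξ * PowerSeries.X) := by
    rw [map_mul, hφX]
    congr 1
    rw [hCalg, AlgEquiv.commutes]
  rw [hkey, AlgEquiv.symm_apply_apply]
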